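/- Let Q be a symmetric positive definite (or negative definite) 3×3 matrix and X an arbitrary 3×3 matrix. Then tr(Q Pa(X) Q^T Pa(X)) ≤ 0, where Pa(X) = (X - X^T)/2. -/

import Mathlib

open Matrix

open scoped MatrixOrder in
lemma key8 (P A : Matrix (Fin 3) (Fin 3) ℝ) (hP : P.PosDef) (hA : Aᵀ = -A) :
    (P * A * P * A).trace ≤ 0 := by
  have hps := hP.posSemidef
  set S := CFC.sqrt P with hSdef
  have hSS : S * S = P := CFC.sqrt_mul_sqrt_self P hps.nonneg
  have hSt : Sᵀ = S := by
    have h := (CFC.sqrt_nonneg P).posSemidef.isHermitian.eq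
    rwa [Matrix.conjTranspose_eq_transpose_of_trivial] at h
  set B := S * A * S with hB
  have hBt : Bᵀ = -B := by
    simp only [hB, Matrix.transpose_mul, hSt, hA, Matrix.neg_mul, Matrix.mul_neg,
      Matrix.mul_assoc]
  have h1 : (P * A * P * A).trace = (B * B).trace := by
    rw [← hSS, hB]
    rw [show S * S * A * (S * S) * A = S * (S * A * (S * S) * A) by
      simp only [Matrix.mul_assoc]]
    rw [Matrix.trace_mul_comm]
    simp only [Matrix.mul_assoc]
  rw [h1]
  have h2 : B * B = -(Bᵀ * B) := by rw [hBt, Matrix.neg_mul, neg_neg]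
  rw [h2, Matrix.trace_neg, neg_nonpos]
  rw [Matrix.trace]
  apply Finset.sum_nonneg
  intro i _
  rw [Matrix.diag_apply, Matrix.mul_apply]
  apply Finset.sum_nonneg
  intro k _
  rw [Matrix.transpose_apply]
  exact mul_self_nonneg _

theorem stmt_8 (Q X : Matrix (Fin 3) (Fin 3) ℝ) (hsymm : Qᵀ = Q)
    (hdef : Q.PosDef ∨ (-Q).PosDef) :
    (Q * ((1/2 : ℝ) • (X - Xᵀ)) * Qᵀ * ((1/2 : ℝ) • (X - Xᵀ))).trace ≤ 0 := by
  have hA : (X - Xᵀ)ᵀ = -(X - Xᵀ) := by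
    rw [Matrix.transpose_sub, Matrix.transpose_transpose, neg_sub]
  have key2 : (Q * (X - Xᵀ) * Q * (X - Xᵀ)).trace ≤ 0 := by
    rcases hdef with h | h
    · exact key8 Q (X - Xᵀ) h hA
    · have := key8 (-Q) (X - Xᵀ) h hA
      simpa [Matrix.neg_mul, Matrix.mul_neg] using this
  have heq : Q * ((1/2 : ℝ) • (X - Xᵀ)) * Qᵀ * ((1/2 : ℝ) • (X - Xᵀ))
      = (1/4 : ℝ) • (Q * (X - Xᵀ) * Q * (X - Xᵀ)) := by
    rw [hsymm]
    simp only [Matrix.mul_smul, Matrix.smul_mul, smul_smul]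
    norm_num
  rw [heq, Matrix.trace_smul, smul_eq_mul]
  linarith
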